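/- Let F ∈ ℂ[x,y] be a binary sextic (homogeneous of degree 6) over ℂ. Then F factors as L^5·M for some linear forms L, M (homogeneous of degree 1) if and only if both transvectants (F,F)^4 and (F,F)^6 are the zero polynomial. -/

import Mathlib

open MvPolynomial

/-- Partial derivative with respect to `x` (the variable `0`). -/
noncomputable def pdx : MvPolynomial (Fin 2) ℂ → MvPolynomial (Fin 2) ℂ :=
  fun p => MvPolynomial.pderiv (0 : Fin 2) p

/-- Partial derivative with respect to `y` (the variable `1`). -/
noncomputable def pdy : MvPolynomial (Fin 2) ℂ → MvPolynomial (Fin 2) ℂ :=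
  fun p => MvPolynomial.pderiv (1 : Fin 2) p

/-- The `r`-th transvectant of binary forms `Φ₁`, `Φ₂` of degrees `q₁`, `q₂`, with the
classical symbolic-method normalization
`((q₁−r)!·(q₂−r)!)/(q₁!·q₂!) · Σ_{k=0}^{r} (−1)^k·binom(r,k)·
  (∂^rΦ₁/∂x^{r−k}∂y^k)·(∂^rΦ₂/∂x^k∂y^{r−k})`. -/
noncomputable def transvectant (q₁ q₂ r : ℕ) (Φ₁ Φ₂ : MvPolynomial (Fin 2) ℂ) :
    MvPolynomial (Fin 2) ℂ :=
  MvPolynomial.C ((((q₁ - r).factorial : ℂ) * ((q₂ - r).factorial : ℂ)) /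
      ((q₁.factorial : ℂ) * (q₂.factorial : ℂ))) *
    ∑ k ∈ Finset.range (r + 1),
      MvPolynomial.C ((-1 : ℂ) ^ k * (r.choose k : ℂ)) *
        (pdx^[r - k] (pdy^[k] Φ₁)) * (pdx^[k] (pdy^[r - k] Φ₂))

noncomputable def mon (n m : ℕ) (a : ℂ) : MvPolynomial (Fin 2) ℂ := C a * X 0 ^ n * X 1 ^ m

lemma mon_eq_monomial (n m : ℕ) (a : ℂ) :
    mon n m a = monomial (Finsupp.single 0 n + Finsupp.single 1 m) a := by
  rw [mon, X_pow_eq_monomial, X_pow_eq_monomial, C_apply, monomial_mul, monomial_mul,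
    zero_add, mul_one, mul_one]

lemma finsupp_sub0 (n m : ℕ) :
    (Finsupp.single (0:Fin 2) n + Finsupp.single 1 m) - Finsupp.single 0 1
      = Finsupp.single 0 (n-1) + Finsupp.single 1 m := by
  ext j; fin_cases j <;> simp [Finsupp.single_apply]

lemma finsupp_sub1 (n m : ℕ) :
    (Finsupp.single (0:Fin 2) n + Finsupp.single 1 m) - Finsupp.single 1 1
      = Finsupp.single 0 n + Finsupp.single 1 (m-1) := by
  ext j; fin_cases j <;> simp [Finsupp.single_apply]

lemma pdx_mon (n m : ℕ) (a : ℂ) : pdx (mon n m a) = mon (n-1) m ((n:ℂ) * a) := by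
  rw [mon_eq_monomial, mon_eq_monomial, pdx, pderiv_monomial]
  rw [show (fun₀ | (0:Fin 2) => 1) = Finsupp.single (0:Fin 2) 1 from rfl, finsupp_sub0]
  congr 1
  · simp [Finsupp.single_apply, mul_comm]

lemma pdy_mon (n m : ℕ) (a : ℂ) : pdy (mon n m a) = mon n (m-1) ((m:ℂ) * a) := by
  rw [mon_eq_monomial, mon_eq_monomial, pdy, pderiv_monomial]
  rw [show (fun₀ | (1:Fin 2) => 1) = Finsupp.single (1:Fin 2) 1 from rfl, finsupp_sub1]
  congr 1
  · simp [Finsupp.single_apply, mul_comm]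

lemma pdx_add (p q : MvPolynomial (Fin 2) ℂ) : pdx (p + q) = pdx p + pdx q := map_add _ _ _
lemma pdy_add (p q : MvPolynomial (Fin 2) ℂ) : pdy (p + q) = pdy p + pdy q := map_add _ _ _

lemma mon_mul (n m n' m' : ℕ) (a b : ℂ) :
    mon n m a * mon n' m' b = mon (n+n') (m+m') (a*b) := by
  simp [mon]; ring

lemma mon_zero (n m : ℕ) : mon n m 0 = 0 := by simp [mon]

lemma C_mul_mon (b : ℂ) (n m : ℕ) (a : ℂ) : C b * mon n m a = mon n m (b*a) := by
  simp [mon]; ring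

lemma it1 {α : Type*} (f : α → α) (x : α) : f^[1] x = f x := rfl
lemma it2 {α : Type*} (f : α → α) (x : α) : f^[2] x = f (f x) := rfl
lemma it3 {α : Type*} (f : α → α) (x : α) : f^[3] x = f (f (f x)) := rfl
lemma it4 {α : Type*} (f : α → α) (x : α) : f^[4] x = f (f (f (f x))) := rfl
lemma it5 {α : Type*} (f : α → α) (x : α) : f^[5] x = f (f (f (f (f x)))) := rfl
lemma it6 {α : Type*} (f : α → α) (x : α) : f^[6] x = f (f (f (f (f (f x))))) := rfl

lemma masterT6 (a0 a1 a2 a3 a4 a5 a6 : ℂ) :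
    C (518400:ℂ) * transvectant 6 6 6
      (mon 6 0 a0 + mon 5 1 a1 + mon 4 2 a2 + mon 3 3 a3 + mon 2 4 a4 + mon 1 5 a5 + mon 0 6 a6)
      (mon 6 0 a0 + mon 5 1 a1 + mon 4 2 a2 + mon 3 3 a3 + mon 2 4 a4 + mon 1 5 a5 + mon 0 6 a6)
    = mon 0 0 (-25920*a3^2 + 69120*a2*a4 - 172800*a1*a5 + 1036800*a0*a6) := by
  rw [transvectant, ← mul_assoc, ← C_mul]
  norm_num [Nat.factorial]
  simp only [Finset.sum_range_succ, Finset.sum_range_zero]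
  norm_num [it1, it2, it3, it4, it5, it6, pdx_add, pdy_add, pdx_mon, pdy_mon,
    mul_add, add_mul, mon_mul, C_mul_mon, mon_zero]
  simp [mon, map_mul, map_add, map_ofNat, Nat.choose]
  ring

lemma masterT4 (a0 a1 a2 a3 a4 a5 a6 : ℂ) :
    C (129600:ℂ) * transvectant 6 6 4
      (mon 6 0 a0 + mon 5 1 a1 + mon 4 2 a2 + mon 3 3 a3 + mon 2 4 a4 + mon 1 5 a5 + mon 0 6 a6)
      (mon 6 0 a0 + mon 5 1 a1 + mon 4 2 a2 + mon 3 3 a3 + mon 2 4 a4 + mon 1 5 a5 + mon 0 6 a6)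
    = mon 4 0 (3456*a2^2 - 8640*a1*a3 + 17280*a0*a4)
      + mon 3 1 (3456*a2*a3 - 17280*a1*a4 + 86400*a0*a5)
      + mon 2 2 (5184*a3^2 - 10368*a2*a4 + 259200*a0*a6)
      + mon 1 3 (3456*a3*a4 - 17280*a2*a5 + 86400*a1*a6)
      + mon 0 4 (3456*a4^2 - 8640*a3*a5 + 17280*a2*a6) := by
  rw [transvectant, ← mul_assoc, ← C_mul]
  norm_num [Nat.factorial]
  simp only [Finset.sum_range_succ, Finset.sum_range_zero]
  norm_num [it1, it2, it3, it4, it5, it6, pdx_add, pdy_add, pdx_mon, pdy_mon,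
    mul_add, add_mul, mon_mul, C_mul_mon, mon_zero]
  simp [mon, map_mul, map_add, map_ofNat, Nat.choose]
  ring

lemma fin2_eq (m : Fin 2 →₀ ℕ) : m = Finsupp.single 0 (m 0) + Finsupp.single 1 (m 1) := by
  ext j; fin_cases j <;> simp [Finsupp.single_apply]

lemma fin2_degree (m : Fin 2 →₀ ℕ) : m.degree = m 0 + m 1 := by
  rw [Finsupp.degree_apply, show (∑ i ∈ m.support, m i) = m.sum (fun _ e => e) from rfl,
    Finsupp.sum_fintype]
  · exact Fin.sum_univ_two _
  · intro; rfl

lemma repr_hom {n : ℕ} {p : MvPolynomial (Fin 2) ℂ} (hp : p.IsHomogeneous n) :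
    p = ∑ i ∈ Finset.range (n+1),
      mon (n-i) i (coeff (Finsupp.single 0 (n-i) + Finsupp.single 1 i) p) := by
  apply MvPolynomial.ext; intro m
  rw [MvPolynomial.coeff_sum]
  simp_rw [mon_eq_monomial, MvPolynomial.coeff_monomial]
  by_cases hm : m 0 + m 1 = n
  · rw [Finset.sum_eq_single (m 1)]
    · have hm' : (Finsupp.single (0:Fin 2) (n - m 1) + Finsupp.single 1 (m 1)) = m := by
        ext j; fin_cases j <;> simp [Finsupp.single_apply] <;> omega
      rw [if_pos hm', hm']
    · intro i hi hne
      rw [if_neg]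
      intro h
      apply hne
      have := DFunLike.congr_fun h (1 : Fin 2)
      simpa [Finsupp.single_apply] using this
    · intro h
      exact absurd (Finset.mem_range.2 (by omega)) h
  · rw [hp.coeff_eq_zero (by rw [fin2_degree]; exact hm)]
    apply (Finset.sum_eq_zero _).symm
    intro i hi
    rw [if_neg]
    intro h
    apply hm
    have h0 := DFunLike.congr_fun h (0 : Fin 2)
    have h1 := DFunLike.congr_fun h (1 : Fin 2)
    simp [Finsupp.single_apply] at h0 h1
    have hin : i ≤ n := Nat.lt_succ_iff.mp (Finset.mem_range.mp hi)
    omega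

lemma repr6' {p : MvPolynomial (Fin 2) ℂ} (hp : p.IsHomogeneous 6) :
    p = mon 6 0 (coeff (Finsupp.single 0 6 + Finsupp.single 1 0) p) + mon 5 1 (coeff (Finsupp.single 0 5 + Finsupp.single 1 1) p) + mon 4 2 (coeff (Finsupp.single 0 4 + Finsupp.single 1 2) p) + mon 3 3 (coeff (Finsupp.single 0 3 + Finsupp.single 1 3) p) + mon 2 4 (coeff (Finsupp.single 0 2 + Finsupp.single 1 4) p) + mon 1 5 (coeff (Finsupp.single 0 1 + Finsupp.single 1 5) p) + mon 0 6 (coeff (Finsupp.single 0 0 + Finsupp.single 1 6) p) := by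
  conv_lhs => rw [repr_hom hp]
  simp only [Finset.sum_range_succ, Finset.sum_range_zero, zero_add]

lemma repr6 {p : MvPolynomial (Fin 2) ℂ} (hp : p.IsHomogeneous 6) :
    ∃ b0 b1 b2 b3 b4 b5 b6 : ℂ, p = mon 6 0 b0 + mon 5 1 b1 + mon 4 2 b2 + mon 3 3 b3
      + mon 2 4 b4 + mon 1 5 b5 + mon 0 6 b6 :=
  ⟨_, _, _, _, _, _, _, repr6' hp⟩

lemma repr1' {p : MvPolynomial (Fin 2) ℂ} (hp : p.IsHomogeneous 1) :
    p = mon 1 0 (coeff (Finsupp.single 0 1 + Finsupp.single 1 0) p) + mon 0 1 (coeff (Finsupp.single 0 0 + Finsupp.single 1 1) p) := by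
  conv_lhs => rw [repr_hom hp]
  simp only [Finset.sum_range_succ, Finset.sum_range_zero, zero_add]

lemma repr1 {p : MvPolynomial (Fin 2) ℂ} (hp : p.IsHomogeneous 1) :
    ∃ u v : ℂ, p = mon 1 0 u + mon 0 1 v :=
  ⟨_, _, repr1' hp⟩

lemma coeff_mon (p q n m : ℕ) (a : ℂ) :
    coeff (Finsupp.single 0 p + Finsupp.single 1 q) (mon n m a)
      = if n = p ∧ m = q then a else 0 := by
  rw [mon_eq_monomial, coeff_monomial]
  by_cases h : n = p ∧ m = q
  · obtain ⟨rfl, rfl⟩ := h; simp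
  · rw [if_neg, if_neg h]
    intro he
    apply h
    have h0 := DFunLike.congr_fun he (0 : Fin 2)
    have h1 := DFunLike.congr_fun he (1 : Fin 2)
    simp [Finsupp.single_apply] at h0 h1
    exact ⟨h0, h1⟩

lemma mon_hom (n m : ℕ) (a : ℂ) : (mon n m a).IsHomogeneous (n+m) := by
  rw [mon_eq_monomial]
  apply isHomogeneous_monomial
  rw [fin2_degree]
  simp [Finsupp.single_apply]

lemma Czero {k : ℂ} (hk : k ≠ 0) {T : MvPolynomial (Fin 2) ℂ} (h : C k * T = 0) : T = 0 := by
  rcases mul_eq_zero.mp h with h' | h'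
  · exact absurd h' (by simpa [MvPolynomial.C_eq_zero] using hk)
  · exact h'


lemma mon_hom10 (a : ℂ) : (mon 1 0 a).IsHomogeneous 1 := by simpa using mon_hom 1 0 a
lemma mon_hom01 (a : ℂ) : (mon 0 1 a).IsHomogeneous 1 := by simpa using mon_hom 0 1 a

lemma construct (b0 b1 b2 b3 b4 b5 b6 c : ℂ) (hb0 : b0 ≠ 0)
    (hQ : 15*b0*c^2 - 5*b1*c + b2 = 0)
    (hG : 10*c^2*(b1-4*b0*c) - b3 = 0)
    (E0 : 3456*b2^2 - 8640*b1*b3 + 17280*b0*b4 = 0)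
    (E1 : 3456*b2*b3 - 17280*b1*b4 + 86400*b0*b5 = 0)
    (E2 : 5184*b3^2 - 10368*b2*b4 + 259200*b0*b6 = 0) :
    mon 6 0 b0 + mon 5 1 b1 + mon 4 2 b2 + mon 3 3 b3 + mon 2 4 b4 + mon 1 5 b5 + mon 0 6 b6
      = (mon 1 0 1 + mon 0 1 c)^5 * (mon 1 0 b0 + mon 0 1 (b1 - 5*b0*c)) := by
  have h2 : b2 = 5*b1*c - 15*b0*c^2 := by linear_combination hQ
  have h3 : b3 = 10*b1*c^2 - 40*b0*c^3 := by linear_combination (-1)*hG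
  have E0' := E0; rw [h2, h3] at E0'
  have h4 : b4 = 10*b1*c^3 - 45*b0*c^4 :=
    mul_left_cancel₀ hb0 (by linear_combination (1/17280)*E0')
  have E1' := E1; rw [h2, h3, h4] at E1'
  have h5 : b5 = 5*b1*c^4 - 24*b0*c^5 :=
    mul_left_cancel₀ hb0 (by linear_combination (1/86400)*E1')
  have E2' := E2; rw [h2, h3, h4] at E2'
  have h6 : b6 = b1*c^5 - 5*b0*c^6 :=
    mul_left_cancel₀ hb0 (by linear_combination (1/259200)*E2')
  rw [h2, h3, h4, h5, h6]
  simp only [mon, map_mul, map_add, map_sub, map_pow, map_ofNat, map_one]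
  ring

/-- A binary sextic `F` is of the form `L⁵M` iff the covariants `(F,F)⁴` and `(F,F)⁶`
vanish. -/
theorem sextic_quintupleRoot_iff (F : MvPolynomial (Fin 2) ℂ)
    (hF : F.IsHomogeneous 6) :
    (∃ L M : MvPolynomial (Fin 2) ℂ, L.IsHomogeneous 1 ∧ M.IsHomogeneous 1 ∧
        F = L ^ 5 * M) ↔
      (transvectant 6 6 4 F F = 0 ∧ transvectant 6 6 6 F F = 0) := by
  constructor
  · rintro ⟨L, M, hL, hM, rfl⟩
    obtain ⟨p, q, hLr⟩ := repr1 hL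
    obtain ⟨r, s, hMr⟩ := repr1 hM
    have hFe : L^5*M = mon 6 0 (p^5*r) + mon 5 1 (5*p^4*q*r + p^5*s)
        + mon 4 2 (10*p^3*q^2*r + 5*p^4*q*s) + mon 3 3 (10*p^2*q^3*r + 10*p^3*q^2*s)
        + mon 2 4 (5*p*q^4*r + 10*p^2*q^3*s) + mon 1 5 (q^5*r + 5*p*q^4*s)
        + mon 0 6 (q^5*s) := by
      rw [hLr, hMr]
      simp only [mon, map_mul, map_add, map_pow, map_ofNat, map_one]
      ring
    constructor
    · refine Czero (k := 129600) (by norm_num) ?_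
      rw [hFe, masterT4]
      simp only [mon, map_mul, map_add, map_pow, map_ofNat, map_sub, map_one]
      ring
    · refine Czero (k := 518400) (by norm_num) ?_
      rw [hFe, masterT6]
      simp only [mon, map_mul, map_add, map_pow, map_ofNat, map_sub, map_neg, map_one]
      ring
  · rintro ⟨hT4, hT6⟩
    obtain ⟨b0, b1, b2, b3, b4, b5, b6, hrep⟩ := repr6 hF
    have h4 := masterT4 b0 b1 b2 b3 b4 b5 b6
    have h6 := masterT6 b0 b1 b2 b3 b4 b5 b6
    rw [← hrep, hT4, mul_zero] at h4
    rw [← hrep, hT6, mul_zero] at h6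
    have E0 := congrArg (coeff (Finsupp.single 0 4 + Finsupp.single 1 0)) h4.symm
    have E1 := congrArg (coeff (Finsupp.single 0 3 + Finsupp.single 1 1)) h4.symm
    have E2 := congrArg (coeff (Finsupp.single 0 2 + Finsupp.single 1 2)) h4.symm
    have E3 := congrArg (coeff (Finsupp.single 0 1 + Finsupp.single 1 3)) h4.symm
    have E4 := congrArg (coeff (Finsupp.single 0 0 + Finsupp.single 1 4)) h4.symm
    have E6 := congrArg (coeff (Finsupp.single 0 0 + Finsupp.single 1 0)) h6.symm
    simp only [coeff_add, coeff_mon, coeff_zero] at E0 E1 E2 E3 E4 E6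
    norm_num at E0 E1 E2 E3 E4 E6
    by_cases hb0 : b0 = 0
    · by_cases hb1 : b1 = 0
      · have h2 : b2 = 0 := by
          have hsq : b2^2 = 0 := by
            linear_combination (1/3456)*E0 + (5/2)*b3*hb1 + (-5)*b4*hb0
          exact sq_eq_zero_iff.mp hsq
        have h3 : b3 = 0 := by
          have hsq : b3^2 = 0 := by
            linear_combination (1/5184)*E2 + 2*b4*h2 + (-50)*b6*hb0
          exact sq_eq_zero_iff.mp hsq
        have h4' : b4 = 0 := by
          have hsq : b4^2 = 0 := by
            linear_combination (1/3456)*E4 + (5/2)*b5*h3 + (-5)*b6*h2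
          exact sq_eq_zero_iff.mp hsq
        refine ⟨mon 0 1 1, mon 1 0 b5 + mon 0 1 b6, mon_hom01 1,
          (mon_hom10 b5).add (mon_hom01 b6), ?_⟩
        rw [hrep, hb0, hb1, h2, h3, h4']
        simp only [mon, map_mul, map_add, map_pow, map_ofNat, map_one, map_zero]
        ring
      · obtain ⟨c, hc⟩ : ∃ x : ℂ, x = b2/(5*b1) := ⟨_, rfl⟩
        have h2 : b2 = 5*b1*c := by rw [hc]; field_simp
        have E0' := E0; rw [hb0, h2] at E0'
        have h3 : b3 = 10*b1*c^2 :=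
          mul_left_cancel₀ hb1 (by linear_combination (-1/8640)*E0')
        have E1' := E1; rw [hb0, h2, h3] at E1'
        have h4' : b4 = 10*b1*c^3 :=
          mul_left_cancel₀ hb1 (by linear_combination (-1/17280)*E1')
        have E6' := E6; rw [hb0, h2, h3, h4'] at E6'
        have h5 : b5 = 5*b1*c^4 :=
          mul_left_cancel₀ hb1 (by linear_combination (-1/172800)*E6')
        have E3' := E3; rw [h2, h3, h4', h5] at E3'
        have h6' : b6 = b1*c^5 :=
          mul_left_cancel₀ hb1 (by linear_combination (1/86400)*E3')
        refine ⟨mon 1 0 1 + mon 0 1 c, mon 0 1 b1,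
          (mon_hom10 1).add (mon_hom01 c), mon_hom01 b1, ?_⟩
        rw [hrep, hb0, h2, h3, h4', h5, h6']
        simp only [mon, map_mul, map_add, map_pow, map_ofNat, map_one, map_zero]
        ring
    · obtain ⟨e, he⟩ := IsAlgClosed.exists_pow_nat_eq (25*b1^2 - 60*b0*b2) (n := 2)
        (by norm_num)
      obtain ⟨c₁, hc₁⟩ : ∃ x : ℂ, x = (5*b1 + e)/(30*b0) := ⟨_, rfl⟩
      have h30 : 30*b0*c₁ = 5*b1 + e := by rw [hc₁]; field_simp
      have h60 : (60*b0 : ℂ) ≠ 0 := mul_ne_zero (by norm_num) hb0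
      have hQ1 : 15*b0*c₁^2 - 5*b1*c₁ + b2 = 0 :=
        mul_left_cancel₀ h60
          (by linear_combination he + ((30*b0*c₁) + (5*b1+e) - 10*b1)*h30)
      have key : (10*c₁^2*(b1-4*b0*c₁) - b3) *
          (10*(b1-3*b0*c₁)^2*(3*b0*b1 - 4*b0*(b1-3*b0*c₁)) - 27*b0^3*b3) = 0 := by
        linear_combination (4*b0*b1^2*b2 + 20*b0*b1^3*c₁ - (64/5)*b0^2*b2^2 + 36*b0^2*b1*b3
            - 64*b0^2*b1*b2*c₁ - 380*b0^2*b1^2*c₁^2 + 192*b0^3*b2*c₁^2 + 1920*b0^3*b1*c₁^3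
            - 2880*b0^4*c₁^4)*hQ1
          + ((-2*b0*b1^2 + (32/5)*b0^2*b2)/1728)*E0 + ((-4*b0^2*b1)/3456)*E1
          + ((12*b0^3)/5184)*E2 + (-5*b0^3/8640)*E6
      rcases mul_eq_zero.mp key with hG1 | hGC
      · exact ⟨mon 1 0 1 + mon 0 1 c₁, mon 1 0 b0 + mon 0 1 (b1 - 5*b0*c₁),
          (mon_hom10 1).add (mon_hom01 c₁), (mon_hom10 b0).add (mon_hom01 (b1 - 5*b0*c₁)),
          by rw [hrep]; exact construct b0 b1 b2 b3 b4 b5 b6 c₁ hb0 hQ1 hG1 E0 E1 E2⟩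
      · obtain ⟨c, hc⟩ : ∃ x : ℂ, x = b1/(3*b0) - c₁ := ⟨_, rfl⟩
        have h3c : 3*b0*c = b1 - 3*b0*c₁ := by rw [hc]; field_simp
        have h3b0 : (3*b0 : ℂ) ≠ 0 := mul_ne_zero (by norm_num) hb0
        have h27 : (27*b0^3 : ℂ) ≠ 0 := mul_ne_zero (by norm_num) (pow_ne_zero 3 hb0)
        have hQ : 15*b0*c^2 - 5*b1*c + b2 = 0 :=
          mul_left_cancel₀ h3b0
            (by linear_combination 3*b0*hQ1 + (5*(3*b0*c) + 5*(b1-3*b0*c₁) - 5*b1)*h3c)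
        have hG : 10*c^2*(b1-4*b0*c) - b3 = 0 :=
          mul_left_cancel₀ h27
            (by linear_combination hGC + (30*b0*b1*(3*b0*c + (b1-3*b0*c₁))
              - 40*b0*((3*b0*c)^2 + (3*b0*c)*(b1-3*b0*c₁) + (b1-3*b0*c₁)^2))*h3c)
        exact ⟨mon 1 0 1 + mon 0 1 c, mon 1 0 b0 + mon 0 1 (b1 - 5*b0*c),
          (mon_hom10 1).add (mon_hom01 c), (mon_hom10 b0).add (mon_hom01 (b1 - 5*b0*c)),
          by rw [hrep]; exact construct b0 b1 b2 b3 b4 b5 b6 c hb0 hQ hG E0 E1 E2⟩
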